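/- arXiv:2603.13300 — 5 statements merged into one kernel-verified Lean document; each statement's English description precedes it below -/
import Mathlib

section
/- Let d, N be positive integers, σ > 0, y₁,…,y_N ∈ ℝ^d, and let E(x) = k_σ(x,x) + N⁻² ∑_{i,j} k_σ(y_i,y_j) − (2/N) ∑_i k_σ(x,y_i) be the MMD potential with Z(x) = N⁻¹ ∑_i k_σ(x,y_i) and w_i(x) = k_σ(x,y_i)/(N·Z(x)). Then for every λ > 0 and every z ∈ ℝ^d, the scaled MMD gradient λ·∇E(z) equals a positive scalar multiple of the Safe Denoiser repellency direction z − ∑_{i=1}^N w_i(z)·y_i; explicitly, λ·∇E(z) = (2λ·Z(z)/σ²) · (z − ∑_{i=1}^N w_i(z) y_i), and 2λ·Z(z)/σ² > 0. -/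
/-- The RBF (Gaussian) kernel on `ℝ^d` with bandwidth `σ`. -/
noncomputable def rbfKernel {d : ℕ} (σ : ℝ) (x y : EuclideanSpace ℝ (Fin d)) : ℝ :=
  Real.exp (-‖x - y‖ ^ 2 / (2 * σ ^ 2))

open scoped RealInnerProductSpace

lemma hasGradientAt_rbf {d : ℕ} {σ : ℝ} (hσ : σ ≠ 0) (c z : EuclideanSpace ℝ (Fin d)) :
    HasGradientAt (fun x => rbfKernel σ x c)
      ((-(rbfKernel σ z c / σ ^ 2)) • (z - c)) z := by
  rw [hasGradientAt_iff_hasFDerivAt]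
  have h1 : HasFDerivAt (fun x : EuclideanSpace ℝ (Fin d) => x - c)
      (ContinuousLinearMap.id ℝ _) z := (hasFDerivAt_id z).sub_const c
  have h2 := (h1.inner ℝ h1).const_mul (-(2 * σ ^ 2))⁻¹
  have h4 := h2.exp
  have hfun : (fun x : EuclideanSpace ℝ (Fin d) => rbfKernel σ x c)
      = fun x => Real.exp ((-(2 * σ ^ 2))⁻¹ * ⟪x - c, x - c⟫) := by
    funext x
    simp only [rbfKernel, real_inner_self_eq_norm_sq]
    congr 1
    field_simp
  rw [hfun]
  refine h4.congr_fderiv ?_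
  ext t
  simp only [ContinuousLinearMap.coe_smul', Pi.smul_apply, ContinuousLinearMap.coe_comp',
    Function.comp_apply, ContinuousLinearMap.prod_apply, ContinuousLinearMap.coe_id', id_eq,
    fderivInnerCLM_apply, InnerProductSpace.toDual_apply_apply, real_inner_smul_left, smul_eq_mul,
    rbfKernel, real_inner_self_eq_norm_sq]
  rw [real_inner_comm t (z - c)]
  have : (-(2 * σ ^ 2))⁻¹ * ‖z - c‖ ^ 2 = -‖z - c‖ ^ 2 / (2 * σ ^ 2) := by field_simp
  rw [this]
  field_simp
  ring

/-- Safe Denoiser as MMD-gradient guidance: the scaled MMD gradient `λ·∇E(z)` equals the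
positive scalar `2λ·Z(z)/σ²` times the Safe Denoiser repellency direction
`z − ∑_i w_i(z)·y_i`. -/
theorem stmt_1 (d N : ℕ) (hd : 0 < d) (hN : 0 < N) (σ : ℝ) (hσ : 0 < σ)
    (y : Fin N → EuclideanSpace ℝ (Fin d))
    (E : EuclideanSpace ℝ (Fin d) → ℝ)
    (hE : ∀ x, E x = rbfKernel σ x x
      + ((N : ℝ))⁻¹ ^ 2 * ∑ i, ∑ j, rbfKernel σ (y i) (y j)
      - (2 / (N : ℝ)) * ∑ i, rbfKernel σ x (y i))
    (Z : EuclideanSpace ℝ (Fin d) → ℝ)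
    (hZ : ∀ x, Z x = ((N : ℝ))⁻¹ * ∑ i, rbfKernel σ x (y i))
    (w : Fin N → EuclideanSpace ℝ (Fin d) → ℝ)
    (hw : ∀ i x, w i x = rbfKernel σ x (y i) / ((N : ℝ) * Z x))
    (lam : ℝ) (hlam : 0 < lam) :
    ∀ z : EuclideanSpace ℝ (Fin d),
      lam • gradient E z = (2 * lam * Z z / σ ^ 2) • (z - ∑ i, w i z • y i) ∧
      0 < 2 * lam * Z z / σ ^ 2 := by
  intro z
  have hσ' : σ ≠ 0 := ne_of_gt hσ
  have hN' : (N : ℝ) ≠ 0 := Nat.cast_ne_zero.mpr hN.ne'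
  set K : Fin N → ℝ := fun i => rbfKernel σ z (y i) with hK
  set S : ℝ := ∑ i, K i with hSdef
  have hKpos : ∀ i, 0 < K i := fun i => Real.exp_pos _
  have hSpos : 0 < S := Finset.sum_pos (fun i _ => hKpos i)
    (Finset.univ_nonempty_iff.mpr ⟨⟨0, hN⟩⟩)
  have hS' : S ≠ 0 := ne_of_gt hSpos
  -- gradient of E
  have hEfun : E = fun x => (Real.exp (-0 / (2 * σ ^ 2))
      + ((N : ℝ))⁻¹ ^ 2 * ∑ i, ∑ j, rbfKernel σ (y i) (y j))
      - (2 / (N : ℝ)) * ∑ i, rbfKernel σ x (y i) := by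
    funext x
    rw [hE x]
    simp [rbfKernel]
  have hSum : HasFDerivAt (fun x : EuclideanSpace ℝ (Fin d) => ∑ i, rbfKernel σ x (y i))
      (∑ i, InnerProductSpace.toDual ℝ _ ((-(K i / σ ^ 2)) • (z - y i))) z :=
    HasFDerivAt.fun_sum fun i _ => (hasGradientAt_rbf hσ' (y i) z).hasFDerivAt
  have hEderiv : HasGradientAt E
      ((2 / ((N : ℝ) * σ ^ 2)) • ∑ i, K i • (z - y i)) z := by
    rw [hasGradientAt_iff_hasFDerivAt, hEfun]
    have h := (hasFDerivAt_const (Real.exp (-0 / (2 * σ ^ 2))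
      + ((N : ℝ))⁻¹ ^ 2 * ∑ i, ∑ j, rbfKernel σ (y i) (y j)) z).sub (hSum.const_mul (2 / (N : ℝ)))
    refine h.congr_fderiv ?_
    rw [map_smul, map_sum]
    ext t
    simp only [ContinuousLinearMap.coe_smul', Pi.smul_apply, ContinuousLinearMap.coe_sub',
      Pi.sub_apply, ContinuousLinearMap.zero_apply, ContinuousLinearMap.coe_sum',
      Finset.sum_apply, InnerProductSpace.toDual_apply_apply, real_inner_smul_left, smul_eq_mul,
      map_smul]
    rw [Finset.mul_sum, Finset.mul_sum]
    rw [zero_sub, ← Finset.sum_neg_distrib]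
    refine Finset.sum_congr rfl fun i _ => ?_
    field_simp
  have hgrad : gradient E z = (2 / ((N : ℝ) * σ ^ 2)) • ∑ i, K i • (z - y i) :=
    hEderiv.gradient
  have hZz : Z z = (N : ℝ)⁻¹ * S := hZ z
  have hwz : ∀ i, w i z = K i / S := by
    intro i
    rw [hw i z, hZz]
    field_simp
    rfl
  have hdir : z - ∑ i, w i z • y i = S⁻¹ • ∑ i, K i • (z - y i) := by
    have : ∑ i, K i • (z - y i) = S • z - ∑ i, K i • y i := by
      simp only [smul_sub, Finset.sum_sub_distrib, ← Finset.sum_smul, hSdef]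
    rw [this, smul_sub, smul_smul, inv_mul_cancel₀ hS', one_smul, Finset.smul_sum]
    congr 1
    refine Finset.sum_congr rfl fun i _ => ?_
    rw [hwz i, smul_smul, div_eq_inv_mul]
  constructor
  · rw [hgrad, hdir, smul_smul, smul_smul, hZz]
    congr 1
    field_simp
  · rw [hZz]
    positivity
end

section
/- Let α, λ, r, d₀ be positive reals with 0 < d₀ < r and α·(r − d₀)·d₀/(4λ) < e⁻¹. Then there exists a unique σ ≥ d₀/√2 (equivalently, a unique σ with d₀²/(2σ²) ≤ 1) satisfying α·(r − d₀) = λ·(2d₀/σ²)·exp(−d₀²/(2σ²)). If instead α·(r − d₀)·d₀/(4λ) = e⁻¹, then σ = d₀/√2 is the unique such solution. -/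
lemma texp_deriv (t : ℝ) : HasDerivAt (fun t => t * Real.exp (-t)) ((1 - t) * Real.exp (-t)) t := by
  have h1 : HasDerivAt (fun t : ℝ => Real.exp (-t)) (-Real.exp (-t)) t := by
    simpa using (hasDerivAt_neg t).exp
  have := (hasDerivAt_id t).mul h1
  convert this using 1
  · rfl
  · rfl
  · rfl
  · simp [id]; ring

lemma texp_mono : StrictMonoOn (fun t : ℝ => t * Real.exp (-t)) (Set.Icc 0 1) := by
  apply strictMonoOn_of_deriv_pos (convex_Icc 0 1)
  · exact (continuous_id.mul (Real.continuous_exp.comp continuous_neg)).continuousOn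
  · intro t ht
    rw [interior_Icc] at ht
    rw [(texp_deriv t).deriv]
    have := Real.exp_pos (-t)
    nlinarith [ht.2]

/-- Radius–bandwidth matching (uniqueness): if `α(r − d₀)d₀/(4λ) < e⁻¹`, there is a unique
`σ ≥ d₀/√2` (equivalently, a unique `σ` with `d₀²/(2σ²) ≤ 1`) satisfying
`α(r − d₀) = λ·(2d₀/σ²)·exp(−d₀²/(2σ²))`; and if `α(r − d₀)d₀/(4λ) = e⁻¹`, then
`σ = d₀/√2` is the unique such solution. -/
theorem stmt_6 (α lam r d₀ : ℝ) (hα : 0 < α) (hlam : 0 < lam)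
    (hd₀ : 0 < d₀) (hd₀r : d₀ < r) :
    (α * (r - d₀) * d₀ / (4 * lam) < Real.exp (-1) →
      ∃! σ : ℝ, d₀ / Real.sqrt 2 ≤ σ ∧
        α * (r - d₀) = lam * (2 * d₀ / σ ^ 2) * Real.exp (-d₀ ^ 2 / (2 * σ ^ 2))) ∧
    (α * (r - d₀) * d₀ / (4 * lam) = Real.exp (-1) →
      (α * (r - d₀) = lam * (2 * d₀ / (d₀ / Real.sqrt 2) ^ 2) *
          Real.exp (-d₀ ^ 2 / (2 * (d₀ / Real.sqrt 2) ^ 2))) ∧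
      ∀ σ : ℝ, d₀ / Real.sqrt 2 ≤ σ →
        α * (r - d₀) = lam * (2 * d₀ / σ ^ 2) * Real.exp (-d₀ ^ 2 / (2 * σ ^ 2)) →
        σ = d₀ / Real.sqrt 2) := by
  set c := α * (r - d₀) * d₀ / (4 * lam) with hc_def
  have hA : 0 < α * (r - d₀) := by nlinarith
  have hc : 0 < c := by positivity
  have hs2 : (0:ℝ) < Real.sqrt 2 := Real.sqrt_pos.mpr (by norm_num)
  have hs2sq : Real.sqrt 2 ^ 2 = 2 := Real.sq_sqrt (by norm_num)
  have hd2 : 0 < d₀ / Real.sqrt 2 := div_pos hd₀ hs2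
  have hd2sq : (d₀ / Real.sqrt 2) ^ 2 = d₀ ^ 2 / 2 := by rw [div_pow, hs2sq]
  -- the key change of variables
  have key : ∀ σ : ℝ, 0 < σ →
      ((α * (r - d₀) = lam * (2 * d₀ / σ ^ 2) * Real.exp (-d₀ ^ 2 / (2 * σ ^ 2))) ↔
        c = (d₀ ^ 2 / (2 * σ ^ 2)) * Real.exp (-(d₀ ^ 2 / (2 * σ ^ 2)))) := by
    intro σ hσ
    have hσ2 : σ ^ 2 ≠ 0 := by positivity
    have hexp : -d₀ ^ 2 / (2 * σ ^ 2) = -(d₀ ^ 2 / (2 * σ ^ 2)) := by ring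
    rw [hexp, hc_def, div_eq_iff (show (4:ℝ) * lam ≠ 0 by positivity)]
    constructor
    · intro h; rw [h]; field_simp; ring
    · intro h
      have goal_eq : lam * (2 * d₀ / σ ^ 2) * Real.exp (-(d₀ ^ 2 / (2 * σ ^ 2))) * d₀ =
          d₀ ^ 2 / (2 * σ ^ 2) * Real.exp (-(d₀ ^ 2 / (2 * σ ^ 2))) * (4 * lam) := by
        field_simp; ring
      exact mul_right_cancel₀ hd₀.ne' (h.trans goal_eq.symm)
  -- u σ ∈ (0,1] when σ ≥ d₀/√2
  have umem : ∀ σ : ℝ, d₀ / Real.sqrt 2 ≤ σ →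
      d₀ ^ 2 / (2 * σ ^ 2) ∈ Set.Icc (0:ℝ) 1 ∧ 0 < d₀ ^ 2 / (2 * σ ^ 2) := by
    intro σ hle
    have hσpos : 0 < σ := hd2.trans_le hle
    have hsq : d₀ ^ 2 / 2 ≤ σ ^ 2 := by
      calc d₀ ^ 2 / 2 = (d₀ / Real.sqrt 2) ^ 2 := hd2sq.symm
        _ ≤ σ ^ 2 := pow_le_pow_left₀ hd2.le hle 2
    have hpos : 0 < d₀ ^ 2 / (2 * σ ^ 2) := by positivity
    refine ⟨⟨hpos.le, ?_⟩, hpos⟩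
    rw [div_le_one (by positivity)]
    linarith
  -- injectivity: σ from u σ
  have sigma_inj : ∀ σ₁ σ₂ : ℝ, 0 < σ₁ → 0 < σ₂ →
      d₀ ^ 2 / (2 * σ₁ ^ 2) = d₀ ^ 2 / (2 * σ₂ ^ 2) → σ₁ = σ₂ := by
    intro σ₁ σ₂ h1 h2 h
    have h1' : (2:ℝ) * σ₁ ^ 2 ≠ 0 := by positivity
    have h2' : (2:ℝ) * σ₂ ^ 2 ≠ 0 := by positivity
    rw [div_eq_div_iff h1' h2'] at h
    have hsq : σ₁ ^ 2 = σ₂ ^ 2 := by nlinarith [pow_pos hd₀ 2]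
    rw [← Real.sqrt_sq h1.le, ← Real.sqrt_sq h2.le, hsq]
  constructor
  · -- strict case
    intro hlt
    -- IVT to find t ∈ (0,1) with t e^{-t} = c
    have hcont : ContinuousOn (fun t : ℝ => t * Real.exp (-t)) (Set.Icc 0 1) :=
      (continuous_id.mul (Real.continuous_exp.comp continuous_neg)).continuousOn
    have hmem : c ∈ Set.Icc ((fun t : ℝ => t * Real.exp (-t)) 0)
        ((fun t : ℝ => t * Real.exp (-t)) 1) := by
      simp only [zero_mul, one_mul]
      exact ⟨hc.le, hlt.le⟩
    obtain ⟨t, htmem, htc⟩ := intermediate_value_Icc (by norm_num : (0:ℝ) ≤ 1) hcont hmem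
    have htc' : t * Real.exp (-t) = c := htc
    have htpos : 0 < t := by
      rcases lt_or_eq_of_le htmem.1 with h | h
      · exact h
      · exfalso; rw [← h] at htc; simp at htc; linarith
    set σ₀ := d₀ / Real.sqrt (2 * t) with hσ₀_def
    have h2t : (0:ℝ) < 2 * t := by linarith
    have hsrt : 0 < Real.sqrt (2 * t) := Real.sqrt_pos.mpr h2t
    have hσ₀pos : 0 < σ₀ := div_pos hd₀ hsrt
    have hσ₀sq : σ₀ ^ 2 = d₀ ^ 2 / (2 * t) := by
      rw [hσ₀_def, div_pow, Real.sq_sqrt h2t.le]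
    have huσ₀ : d₀ ^ 2 / (2 * σ₀ ^ 2) = t := by
      rw [hσ₀sq]; field_simp
    have hge : d₀ / Real.sqrt 2 ≤ σ₀ := by
      apply div_le_div_of_nonneg_left hd₀.le hsrt
      exact Real.sqrt_le_sqrt (by linarith [htmem.2])
    refine ⟨σ₀, ⟨hge, (key σ₀ hσ₀pos).mpr ?_⟩, ?_⟩
    · rw [huσ₀]; exact htc'.symm
    · intro σ ⟨hge', heq'⟩
      have hσpos : 0 < σ := hd2.trans_le hge'
      have ht' := (key σ hσpos).mp heq'
      have hu := (umem σ hge').1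
      have hueq : d₀ ^ 2 / (2 * σ ^ 2) = t :=
        texp_mono.injOn hu htmem (ht'.symm.trans htc'.symm)
      exact sigma_inj σ σ₀ hσpos hσ₀pos (by rw [hueq, huσ₀])
  · -- boundary case
    intro heq
    have hu2 : d₀ ^ 2 / (2 * (d₀ / Real.sqrt 2) ^ 2) = 1 := by
      rw [hd2sq]; field_simp
    constructor
    · apply (key (d₀ / Real.sqrt 2) hd2).mpr
      rw [hu2, heq]; ring
    · intro σ hge' heq'
      have hσpos : 0 < σ := hd2.trans_le hge'
      have ht' := (key σ hσpos).mp heq'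
      have hu := (umem σ hge').1
      have hueq : d₀ ^ 2 / (2 * σ ^ 2) = 1 := by
        apply texp_mono.injOn hu (Set.mem_Icc.mpr ⟨by norm_num, le_refl 1⟩)
        simp only [one_mul]
        rw [← ht', ← heq]
      exact sigma_inj σ (d₀ / Real.sqrt 2) hσpos hd2 (by rw [hueq, hu2])
end

section
/- Forward-time critical window (sufficient certificate). Let d be a positive integer, s_c ∈ (0, 1], μ > 0, δ > 0. Let h, E : ℝ^d → ℝ be continuously differentiable, let f̃ : [0, 1] × ℝ^d → ℝ^d be continuous, let β, L : [0, s_c] → ℝ be continuous and nonnegative, and let x : [0, s_c] → ℝ^d be differentiable with x'(s) = f̃(s, x(s)) + β(s)·∇E(x(s)) for all s ∈ [0, s_c]. Suppose that for all s ∈ [0, s_c]: (i) ⟨∇h(x(s)), ∇E(x(s))⟩ ≥ μ (alignment), and (ii) ⟨∇h(x(s)), f̃(s, x(s))⟩ ≥ L(s)·h(x(s)) (the drift bound used along the trajectory). If exp(∫₀^{s_c} L(τ) dτ)·h(x(0)) + μ·∫₀^{s_c} exp(∫_u^{s_c} L(τ) dτ)·β(u) du ≥ δ, then h(x(s_c))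 ≥ δ. -/
open scoped RealInnerProductSpace

/-- Forward-time critical window (sufficient certificate): along the guided flow
`x'(s) = f̃(s, x(s)) + β(s)·∇E(x(s))`, if the alignment `⟪∇h, ∇E⟫ ≥ μ` and the drift
bound `⟪∇h, f̃⟫ ≥ L(s)·h(x(s))` hold on `[0, s_c]`, and
`exp(∫₀^{s_c} L)·h(x(0)) + μ·∫₀^{s_c} exp(∫_u^{s_c} L)·β(u) du ≥ δ`,
then `h(x(s_c)) ≥ δ`. -/
theorem stmt_11 (d : ℕ) (hd : 0 < d) (s_c : ℝ) (hs_c : s_c ∈ Set.Ioc (0 : ℝ) 1)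
    (μ δ : ℝ) (hμ : 0 < μ) (hδ : 0 < δ)
    (h E : EuclideanSpace ℝ (Fin d) → ℝ)
    (hh : ContDiff ℝ 1 h) (hE : ContDiff ℝ 1 E)
    (f : ℝ → EuclideanSpace ℝ (Fin d) → EuclideanSpace ℝ (Fin d))
    (hf : ContinuousOn (Function.uncurry f) (Set.Icc (0 : ℝ) 1 ×ˢ Set.univ))
    (β L : ℝ → ℝ)
    (hβ : ContinuousOn β (Set.Icc 0 s_c)) (hβ0 : ∀ s ∈ Set.Icc (0 : ℝ) s_c, 0 ≤ β s)
    (hL : ContinuousOn L (Set.Icc 0 s_c)) (hL0 : ∀ s ∈ Set.Icc (0 : ℝ) s_c, 0 ≤ L s)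
    (x : ℝ → EuclideanSpace ℝ (Fin d))
    (hx : ∀ s ∈ Set.Icc (0 : ℝ) s_c,
      HasDerivAt x (f s (x s) + β s • gradient E (x s)) s)
    (halign : ∀ s ∈ Set.Icc (0 : ℝ) s_c, μ ≤ ⟪gradient h (x s), gradient E (x s)⟫)
    (hdrift : ∀ s ∈ Set.Icc (0 : ℝ) s_c, L s * h (x s) ≤ ⟪gradient h (x s), f s (x s)⟫)
    (hcert : δ ≤ Real.exp (∫ τ in (0 : ℝ)..s_c, L τ) * h (x 0)
      + μ * ∫ u in (0 : ℝ)..s_c, Real.exp (∫ τ in u..s_c, L τ) * β u) :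
    δ ≤ h (x s_c) := by
  obtain ⟨hs0, hs1⟩ := hs_c
  have huIcc : Set.uIcc (0 : ℝ) s_c = Set.Icc 0 s_c := Set.uIcc_of_le hs0.le
  -- the integral A s = ∫_0^s L
  set A : ℝ → ℝ := fun u => ∫ τ in (0 : ℝ)..u, L τ with hA_def
  have hLint : IntervalIntegrable L MeasureTheory.volume 0 s_c :=
    (huIcc ▸ hL).intervalIntegrable
  have hAcont : ContinuousOn A (Set.Icc 0 s_c) := by
    have := intervalIntegral.continuousOn_primitive_interval
      (f := L) (μ := MeasureTheory.volume) (a := (0:ℝ)) (b := s_c)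
      (huIcc ▸ hL.integrableOn_compact isCompact_Icc)
    rwa [huIcc] at this
  have hA0 : A 0 = 0 := intervalIntegral.integral_same
  -- derivative of A at interior points
  have hAderiv : ∀ s ∈ Set.Ioo (0 : ℝ) s_c, HasDerivAt A (L s) s := by
    intro s hs
    have hmem : Set.Icc (0 : ℝ) s_c ∈ nhds s := Icc_mem_nhds hs.1 hs.2
    have hcL : ContinuousAt L s := hL.continuousAt hmem
    have hsm : StronglyMeasurableAtFilter L (nhds s) MeasureTheory.volume := by
      have := hL.stronglyMeasurableAtFilter_nhdsWithin
        (μ := MeasureTheory.volume) measurableSet_Icc s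
      rwa [nhdsWithin_eq_nhds.mpr hmem] at this
    exact intervalIntegral.integral_hasDerivAt_right
      (hLint.mono_set (by rw [huIcc, Set.uIcc_of_le hs.1.le]
                          exact Set.Icc_subset_Icc le_rfl hs.2.le)) hsm hcL
  -- the weighted-β integrand and its primitive B
  set c : ℝ → ℝ := fun u => Real.exp (-(A u)) * β u with hc_def
  have hccont : ContinuousOn c (Set.Icc 0 s_c) :=
    ((hAcont.neg).rexp.mul hβ)
  have hcint : IntervalIntegrable c MeasureTheory.volume 0 s_c :=
    (huIcc ▸ hccont).intervalIntegrable
  set B : ℝ → ℝ := fun u => ∫ t in (0 : ℝ)..u, c t with hB_def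
  have hBcont : ContinuousOn B (Set.Icc 0 s_c) := by
    have := intervalIntegral.continuousOn_primitive_interval
      (f := c) (μ := MeasureTheory.volume) (a := (0:ℝ)) (b := s_c)
      (huIcc ▸ hccont.integrableOn_compact isCompact_Icc)
    rwa [huIcc] at this
  have hB0 : B 0 = 0 := intervalIntegral.integral_same
  have hBderiv : ∀ s ∈ Set.Ioo (0 : ℝ) s_c, HasDerivAt B (c s) s := by
    intro s hs
    have hmem : Set.Icc (0 : ℝ) s_c ∈ nhds s := Icc_mem_nhds hs.1 hs.2
    have hcc : ContinuousAt c s := hccont.continuousAt hmem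
    have hsm : StronglyMeasurableAtFilter c (nhds s) MeasureTheory.volume := by
      have := hccont.stronglyMeasurableAtFilter_nhdsWithin
        (μ := MeasureTheory.volume) measurableSet_Icc s
      rwa [nhdsWithin_eq_nhds.mpr hmem] at this
    exact intervalIntegral.integral_hasDerivAt_right
      (hcint.mono_set (by rw [huIcc, Set.uIcc_of_le hs.1.le]
                          exact Set.Icc_subset_Icc le_rfl hs.2.le)) hsm hcc
  -- derivative of g = h ∘ x
  set g : ℝ → ℝ := fun s => h (x s) with hg_def
  have hgderiv : ∀ s ∈ Set.Icc (0 : ℝ) s_c,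
      HasDerivAt g (⟪gradient h (x s), f s (x s) + β s • gradient E (x s)⟫) s := by
    intro s hs
    have hdiff : DifferentiableAt ℝ h (x s) := (hh.differentiable one_ne_zero) (x s)
    have hgr := hdiff.hasGradientAt
    have := hgr.hasFDerivAt.comp_hasDerivAt s (hx s hs)
    simp only [InnerProductSpace.toDual_apply_apply] at this
    exact this
  have hgcont : ContinuousOn g (Set.Icc 0 s_c) := fun s hs =>
    ((hgderiv s hs).continuousAt).continuousWithinAt
  -- the integrating-factor function φ
  set φ : ℝ → ℝ := fun s => Real.exp (-(A s)) * g s - μ * B s with hφ_def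
  have hφcont : ContinuousOn φ (Set.Icc 0 s_c) :=
    ((hAcont.neg).rexp.mul hgcont).sub (continuousOn_const.mul hBcont)
  have hφderiv : ∀ s ∈ Set.Ioo (0 : ℝ) s_c,
      HasDerivAt φ (Real.exp (-(A s)) *
        (⟪gradient h (x s), f s (x s) + β s • gradient E (x s)⟫ - L s * g s) - μ * c s) s := by
    intro s hs
    have h1 : HasDerivAt (fun u => Real.exp (-(A u))) (Real.exp (-(A s)) * (-(L s))) s :=
      ((hAderiv s hs).neg).exp
    have h2 := (h1.mul (hgderiv s (Set.mem_Icc_of_Ioo hs))).sub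
      ((hBderiv s hs).const_mul μ)
    exact h2.congr_deriv (by ring)
  have hφ'nonneg : ∀ s ∈ Set.Ioo (0 : ℝ) s_c,
      0 ≤ Real.exp (-(A s)) *
        (⟪gradient h (x s), f s (x s) + β s • gradient E (x s)⟫ - L s * g s) - μ * c s := by
    intro s hs
    have hsI : s ∈ Set.Icc (0 : ℝ) s_c := Set.mem_Icc_of_Ioo hs
    have hβs := hβ0 s hsI
    have key : L s * g s + μ * β s ≤
        ⟪gradient h (x s), f s (x s) + β s • gradient E (x s)⟫ := by
      rw [inner_add_right, real_inner_smul_right]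
      have h1 := hdrift s hsI
      have h2 : μ * β s ≤ β s * ⟪gradient h (x s), gradient E (x s)⟫ := by
        have := mul_le_mul_of_nonneg_left (halign s hsI) hβs
        linarith
      linarith
    have hexp : 0 < Real.exp (-(A s)) := Real.exp_pos _
    have : μ * β s ≤ ⟪gradient h (x s), f s (x s) + β s • gradient E (x s)⟫ - L s * g s := by
      linarith
    have h3 : μ * β s * Real.exp (-(A s)) ≤
        (⟪gradient h (x s), f s (x s) + β s • gradient E (x s)⟫ - L s * g s)
          * Real.exp (-(A s)) :=
      mul_le_mul_of_nonneg_right this hexp.le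
    simp only [hc_def]
    nlinarith
  -- φ is monotone on [0, s_c]
  have hmono : MonotoneOn φ (Set.Icc 0 s_c) := by
    apply monotoneOn_of_deriv_nonneg (convex_Icc _ _) hφcont
    · intro s hs
      rw [interior_Icc] at hs
      exact ((hφderiv s hs).differentiableAt).differentiableWithinAt
    · intro s hs
      rw [interior_Icc] at hs
      rw [(hφderiv s hs).deriv]
      exact hφ'nonneg s hs
  have hφ0 : φ 0 = g 0 := by simp [hφ_def, hA0, hB0]
  have hφle : φ 0 ≤ φ s_c :=
    hmono (Set.left_mem_Icc.mpr hs0.le) (Set.right_mem_Icc.mpr hs0.le) hs0.le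
  -- rewrite the certificate integral via B
  have hint_eq : (∫ u in (0 : ℝ)..s_c, Real.exp (∫ τ in u..s_c, L τ) * β u)
      = Real.exp (A s_c) * B s_c := by
    rw [hB_def]
    rw [← intervalIntegral.integral_const_mul]
    apply intervalIntegral.integral_congr
    intro u hu
    rw [huIcc] at hu
    have hsub : A s_c - A u = ∫ τ in u..s_c, L τ := by
      exact intervalIntegral.integral_interval_sub_left hLint
        (hLint.mono_set (by rw [huIcc, Set.uIcc_of_le hu.1]
                            exact Set.Icc_subset_Icc le_rfl hu.2))
    have : Real.exp (A s_c) * (Real.exp (-(A u)) * β u)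
        = Real.exp (A s_c - A u) * β u := by
      rw [Real.exp_sub, Real.exp_neg]
      field_simp
    rw [hc_def]
    simp only
    rw [this, hsub]
  -- conclude
  have hP : (0 : ℝ) < Real.exp (A s_c) := Real.exp_pos _
  have hle : g 0 + μ * B s_c ≤ Real.exp (-(A s_c)) * g s_c := by
    have := hφle
    rw [hφ0] at this
    simp only [hφ_def] at this
    linarith
  have hexp_mul : Real.exp (A s_c) * Real.exp (-(A s_c)) = 1 := by
    rw [← Real.exp_add]; simp
  have hfinal : Real.exp (A s_c) * g 0 + μ * (Real.exp (A s_c) * B s_c) ≤ g s_c := by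
    have h4 := mul_le_mul_of_nonneg_left hle hP.le
    have h5 : Real.exp (A s_c) * (Real.exp (-(A s_c)) * g s_c) = g s_c := by
      rw [← mul_assoc, hexp_mul, one_mul]
    calc Real.exp (A s_c) * g 0 + μ * (Real.exp (A s_c) * B s_c)
        = Real.exp (A s_c) * (g 0 + μ * B s_c) := by ring
      _ ≤ Real.exp (A s_c) * (Real.exp (-(A s_c)) * g s_c) := h4
      _ = g s_c := h5
  calc δ ≤ Real.exp (∫ τ in (0 : ℝ)..s_c, L τ) * h (x 0)
      + μ * ∫ u in (0 : ℝ)..s_c, Real.exp (∫ τ in u..s_c, L τ) * β u := hcert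
    _ = Real.exp (A s_c) * g 0 + μ * (Real.exp (A s_c) * B s_c) := by rw [hint_eq]
    _ ≤ g s_c := hfinal
end

section
/- Earlier guidance is better under a fixed budget. Let s_c ∈ (0, 1], let L : [0, s_c] → ℝ be integrable with L ≥ 0, and let β₁, β₂ : [0, s_c] → ℝ be integrable and nonnegative with equal budgets ∫₀^{s_c} β₁(u) du = ∫₀^{s_c} β₂(u) du. Suppose there exists u* ∈ [0, s_c] such that β₁(u) ≥ β₂(u) for almost every u ∈ [0, u*] and β₁(u) ≤ β₂(u) for almost every u ∈ [u*, s_c] (i.e., β₁ shifts mass of β₂ to earlier times). Then Ī_L(β₁) ≥ Ī_L(β₂), where Ī_L(β) = ∫₀^{s_c} exp(∫_u^{s_c} L(τ) dτ)·β(u) du. -/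
open MeasureTheory

/-- Earlier guidance is better under a fixed budget: if `β₁` shifts mass of `β₂` toward
earlier times (pointwise a.e. `β₁ ≥ β₂` before `u*` and `β₁ ≤ β₂` after `u*`) while
keeping the same budget `∫₀^{s_c} β₁ = ∫₀^{s_c} β₂`, then the weighted guidance mass
`Ī_L(β) = ∫₀^{s_c} exp(∫_u^{s_c} L)·β(u) du` satisfies `Ī_L(β₁) ≥ Ī_L(β₂)`. -/
theorem stmt_14 (s_c : ℝ) (hs_c : s_c ∈ Set.Ioc (0 : ℝ) 1)
    (L β₁ β₂ : ℝ → ℝ)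
    (hL : IntervalIntegrable L volume 0 s_c)
    (hL0 : ∀ τ ∈ Set.Icc (0 : ℝ) s_c, 0 ≤ L τ)
    (hβ₁ : IntervalIntegrable β₁ volume 0 s_c)
    (hβ₂ : IntervalIntegrable β₂ volume 0 s_c)
    (hβ₁0 : ∀ u ∈ Set.Icc (0 : ℝ) s_c, 0 ≤ β₁ u)
    (hβ₂0 : ∀ u ∈ Set.Icc (0 : ℝ) s_c, 0 ≤ β₂ u)
    (hbudget : (∫ u in (0 : ℝ)..s_c, β₁ u) = ∫ u in (0 : ℝ)..s_c, β₂ u)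
    (u_star : ℝ) (hu_star : u_star ∈ Set.Icc (0 : ℝ) s_c)
    (hearly : ∀ᵐ u ∂volume, u ∈ Set.Icc (0 : ℝ) u_star → β₂ u ≤ β₁ u)
    (hlate : ∀ᵐ u ∂volume, u ∈ Set.Icc u_star s_c → β₁ u ≤ β₂ u) :
    (∫ u in (0 : ℝ)..s_c, Real.exp (∫ τ in u..s_c, L τ) * β₂ u)
      ≤ ∫ u in (0 : ℝ)..s_c, Real.exp (∫ τ in u..s_c, L τ) * β₁ u := by
  obtain ⟨hs0, hs1⟩ := hs_c
  obtain ⟨hu0, hus⟩ := hu_star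
  set W : ℝ → ℝ := fun u => Real.exp (∫ τ in u..s_c, L τ) with hW
  -- continuity of W on [0, s_c]
  have hLIcc : IntegrableOn L (Set.uIcc 0 s_c) volume := by
    rw [Set.uIcc_of_le hs0.le]
    exact (intervalIntegrable_iff_integrableOn_Icc_of_le hs0.le).mp hL
  have hWcont : ContinuousOn W (Set.uIcc 0 s_c) :=
    Real.continuous_exp.comp_continuousOn
      (intervalIntegral.continuousOn_primitive_interval_left hLIcc)
  -- monotonicity of W
  have hWmono : ∀ a ∈ Set.Icc (0:ℝ) s_c, ∀ b ∈ Set.Icc (0:ℝ) s_c, a ≤ b → W b ≤ W a := by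
    intro a ha b hb hab
    apply Real.exp_le_exp.mpr
    have h1 : IntervalIntegrable L volume a b :=
      hL.mono_set (Set.uIcc_subset_uIcc (by rw [Set.uIcc_of_le hs0.le]; exact ha)
        (by rw [Set.uIcc_of_le hs0.le]; exact hb))
    have h2 : IntervalIntegrable L volume b s_c :=
      hL.mono_set (Set.uIcc_subset_uIcc (by rw [Set.uIcc_of_le hs0.le]; exact hb)
        (by rw [Set.uIcc_of_le hs0.le]; exact Set.right_mem_Icc.mpr hs0.le))
    have hsplit : (∫ τ in a..b, L τ) + ∫ τ in b..s_c, L τ = ∫ τ in a..s_c, L τ :=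
      intervalIntegral.integral_add_adjacent_intervals h1 h2
    have hnn : (0:ℝ) ≤ ∫ τ in a..b, L τ := by
      apply intervalIntegral.integral_nonneg hab
      intro τ hτ
      exact hL0 τ ⟨le_trans ha.1 hτ.1, le_trans hτ.2 hb.2⟩
    linarith
  -- interval integrability of products
  have hsub1 : Set.uIcc 0 u_star ⊆ Set.uIcc 0 s_c :=
    Set.uIcc_subset_uIcc (Set.left_mem_uIcc)
      (by rw [Set.uIcc_of_le hs0.le]; exact ⟨hu0, hus⟩)
  have hsub2 : Set.uIcc u_star s_c ⊆ Set.uIcc 0 s_c :=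
    Set.uIcc_subset_uIcc (by rw [Set.uIcc_of_le hs0.le]; exact ⟨hu0, hus⟩)
      (by rw [Set.uIcc_of_le hs0.le]; exact Set.right_mem_Icc.mpr hs0.le)
  have hδ : IntervalIntegrable (fun u => β₁ u - β₂ u) volume 0 s_c := hβ₁.sub hβ₂
  have hWδ : IntervalIntegrable (fun u => W u * (β₁ u - β₂ u)) volume 0 s_c :=
    hδ.continuousOn_mul hWcont
  have hWδ1 : IntervalIntegrable (fun u => W u * (β₁ u - β₂ u)) volume 0 u_star :=
    hWδ.mono_set hsub1
  have hWδ2 : IntervalIntegrable (fun u => W u * (β₁ u - β₂ u)) volume u_star s_c :=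
    hWδ.mono_set hsub2
  have hδ1 : IntervalIntegrable (fun u => β₁ u - β₂ u) volume 0 u_star := hδ.mono_set hsub1
  have hδ2 : IntervalIntegrable (fun u => β₁ u - β₂ u) volume u_star s_c := hδ.mono_set hsub2
  set c : ℝ := W u_star with hc
  -- lower bound on early part
  have h1 : (∫ u in (0:ℝ)..u_star, c * (β₁ u - β₂ u))
      ≤ ∫ u in (0:ℝ)..u_star, W u * (β₁ u - β₂ u) := by
    apply intervalIntegral.integral_mono_ae_restrict hu0 (hδ1.const_mul c) hWδ1
    have h := ae_restrict_of_ae (μ := volume) (s := Set.Icc (0:ℝ) u_star) hearly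
    filter_upwards [h, ae_restrict_mem measurableSet_Icc] with u hu hmem
    have hd : 0 ≤ β₁ u - β₂ u := sub_nonneg.mpr (hu hmem)
    have hcW : c ≤ W u := hWmono u ⟨hmem.1, le_trans hmem.2 hus⟩ u_star ⟨hu0, hus⟩ hmem.2
    exact mul_le_mul_of_nonneg_right hcW hd
  -- lower bound on late part
  have h2 : (∫ u in u_star..s_c, c * (β₁ u - β₂ u))
      ≤ ∫ u in u_star..s_c, W u * (β₁ u - β₂ u) := by
    apply intervalIntegral.integral_mono_ae_restrict hus (hδ2.const_mul c) hWδ2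
    have h := ae_restrict_of_ae (μ := volume) (s := Set.Icc u_star s_c) hlate
    filter_upwards [h, ae_restrict_mem measurableSet_Icc] with u hu hmem
    have hd : β₁ u - β₂ u ≤ 0 := sub_nonpos.mpr (hu hmem)
    have hcW : W u ≤ c := hWmono u_star ⟨hu0, hus⟩ u ⟨le_trans hu0 hmem.1, hmem.2⟩ hmem.1
    calc c * (β₁ u - β₂ u) = (β₁ u - β₂ u) * c := mul_comm _ _
      _ ≤ (β₁ u - β₂ u) * W u := mul_le_mul_of_nonpos_left hcW hd
      _ = W u * (β₁ u - β₂ u) := mul_comm _ _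
  -- combine
  have hδ0 : (∫ u in (0:ℝ)..s_c, (β₁ u - β₂ u)) = 0 := by
    rw [intervalIntegral.integral_sub hβ₁ hβ₂, hbudget, sub_self]
  have hsplitδ : (∫ u in (0:ℝ)..u_star, (β₁ u - β₂ u)) + ∫ u in u_star..s_c, (β₁ u - β₂ u)
      = ∫ u in (0:ℝ)..s_c, (β₁ u - β₂ u) :=
    intervalIntegral.integral_add_adjacent_intervals hδ1 hδ2
  have hsplitW : (∫ u in (0:ℝ)..u_star, W u * (β₁ u - β₂ u))
      + ∫ u in u_star..s_c, W u * (β₁ u - β₂ u)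
      = ∫ u in (0:ℝ)..s_c, W u * (β₁ u - β₂ u) :=
    intervalIntegral.integral_add_adjacent_intervals hWδ1 hWδ2
  have hkey : (0:ℝ) ≤ ∫ u in (0:ℝ)..s_c, W u * (β₁ u - β₂ u) := by
    have e1 : (∫ u in (0:ℝ)..u_star, c * (β₁ u - β₂ u))
        = c * ∫ u in (0:ℝ)..u_star, (β₁ u - β₂ u) := by
      rw [intervalIntegral.integral_const_mul]
    have e2 : (∫ u in u_star..s_c, c * (β₁ u - β₂ u))
        = c * ∫ u in u_star..s_c, (β₁ u - β₂ u) := by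
      rw [intervalIntegral.integral_const_mul]
    have e3 : c * (∫ u in (0:ℝ)..u_star, (β₁ u - β₂ u))
        + c * (∫ u in u_star..s_c, (β₁ u - β₂ u))
        = c * ((∫ u in (0:ℝ)..u_star, (β₁ u - β₂ u))
          + ∫ u in u_star..s_c, (β₁ u - β₂ u)) := (mul_add _ _ _).symm
    rw [hsplitδ, hδ0, mul_zero] at e3
    linarith
  have hint : (∫ u in (0:ℝ)..s_c, W u * (β₁ u - β₂ u))
      = (∫ u in (0:ℝ)..s_c, W u * β₁ u) - ∫ u in (0:ℝ)..s_c, W u * β₂ u := by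
    rw [← intervalIntegral.integral_sub (hβ₁.continuousOn_mul hWcont)
      (hβ₂.continuousOn_mul hWcont)]
    congr 1
    ext u
    ring
  have : (∫ u in (0:ℝ)..s_c, W u * β₂ u) ≤ ∫ u in (0:ℝ)..s_c, W u * β₁ u := by
    rw [hint] at hkey; linarith
  simpa [hW] using this
end

section
/- Safe-denoiser decomposition. Let d be a positive integer, let p : ℝ^d → ℝ be a nonnegative integrable function (a data density), let S ⊆ ℝ^d be measurable (the safe set), and let q : ℝ^d → ℝ be a measurable strictly positive function (the diffusion kernel x ↦ q_t(x_t | x) for a fixed x_t). Define Z_safe = ∫_S p, Z_unsafe = ∫_{Sᶜ} p, p_{safe,t} = Z_safe⁻¹ ∫_S p(x) q(x) dx, p_{unsafe,t} = Z_unsafe⁻¹ ∫_{Sᶜ} p(x) q(x) dx, and the denoisers E_data = (∫ x·p(x)q(x) dx)/(∫ p(x)q(x) dx), E_safe = (∫_S x·p(x)q(x) dx)/(∫_S p(x)q(x) dx), E_unsafe = (∫_{Sᶜ} x·p(x)q(x) dx)/(∫_{Sᶜ} p(x)q(x) dx). Assume x ↦ ‖x‖·p(x)·q(x) is integrable, and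 that ∫_S p(x)q(x) dx > 0 and ∫_{Sᶜ} p(x)q(x) dx > 0 (so Z_safe > 0 and Z_unsafe > 0). Then with β* = (Z_unsafe · p_{unsafe,t})/(Z_safe · p_{safe,t}), one has E_safe = E_data + β*·(E_data − E_unsafe). -/
open MeasureTheory

/-- Safe-denoiser decomposition: with a nonnegative integrable data density `p`, a
measurable safe set `S`, a strictly positive measurable diffusion kernel `q`, partition
masses `Z_safe = ∫_S p`, `Z_unsafe = ∫_{Sᶜ} p`, marginals
`p_safe = Z_safe⁻¹ ∫_S p·q`, `p_unsafe = Z_unsafe⁻¹ ∫_{Sᶜ} p·q`, and denoisers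
`E_data`, `E_safe`, `E_unsafe` (the corresponding posterior means), setting
`β* = (Z_unsafe·p_unsafe)/(Z_safe·p_safe)` gives
`E_safe = E_data + β*·(E_data − E_unsafe)`. -/
theorem stmt_15 (d : ℕ) (hd : 0 < d)
    (p q : EuclideanSpace ℝ (Fin d) → ℝ)
    (hp_meas : Measurable p) (hq_meas : Measurable q)
    (hp_int : Integrable p)
    (hp_nonneg : ∀ x, 0 ≤ p x) (hq_pos : ∀ x, 0 < q x)
    (S : Set (EuclideanSpace ℝ (Fin d))) (hS : MeasurableSet S)
    (hpq_int : Integrable (fun x => p x * q x))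
    (hxpq_int : Integrable (fun x => ‖x‖ * (p x * q x)))
    (hA : 0 < ∫ x in S, p x * q x)
    (hB : 0 < ∫ x in Sᶜ, p x * q x)
    (Zsafe Zunsafe : ℝ)
    (hZs : Zsafe = ∫ x in S, p x)
    (hZu : Zunsafe = ∫ x in Sᶜ, p x)
    (psafe punsafe : ℝ)
    (hps : psafe = Zsafe⁻¹ * ∫ x in S, p x * q x)
    (hpu : punsafe = Zunsafe⁻¹ * ∫ x in Sᶜ, p x * q x)
    (Edata Esafe Eunsafe : EuclideanSpace ℝ (Fin d))
    (hEdata : Edata = (∫ x, p x * q x)⁻¹ • ∫ x, (p x * q x) • x)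
    (hEsafe : Esafe = (∫ x in S, p x * q x)⁻¹ • ∫ x in S, (p x * q x) • x)
    (hEunsafe : Eunsafe = (∫ x in Sᶜ, p x * q x)⁻¹ • ∫ x in Sᶜ, (p x * q x) • x)
    (βstar : ℝ) (hβstar : βstar = (Zunsafe * punsafe) / (Zsafe * psafe)) :
    Esafe = Edata + βstar • (Edata - Eunsafe) := by

  classical
  have key : ∀ (T : Set (EuclideanSpace ℝ (Fin d))), MeasurableSet T →
      0 < (∫ x in T, p x * q x) → 0 < ∫ x in T, p x := by
    intro T hT hpos
    rcases (setIntegral_nonneg hT fun x _ => hp_nonneg x).lt_or_eq with h | h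
    · exact h
    · exfalso
      have hint : IntegrableOn p T := hp_int.integrableOn
      have hz : p =ᵐ[volume.restrict T] 0 :=
        (integral_eq_zero_iff_of_nonneg (fun x => hp_nonneg x) hint).mp h.symm
      have hz' : (fun x => p x * q x) =ᵐ[volume.restrict T] 0 := by
        filter_upwards [hz] with x hx
        simp [hx]
      rw [integral_congr_ae hz'] at hpos
      simp at hpos
  set A := ∫ x in S, p x * q x with hAdef
  set B := ∫ x in Sᶜ, p x * q x with hBdef
  have hZsP : 0 < Zsafe := hZs ▸ key S hS hA
  have hZuP : 0 < Zunsafe := hZu ▸ key Sᶜ hS.compl hB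
  have hβ : βstar = B / A := by
    rw [hβstar, hps, hpu]
    field_simp
  have hvint : Integrable (fun x => (p x * q x) • x) := by
    refine hxpq_int.mono' ?_ ?_
    · exact ((hp_meas.mul hq_meas).aestronglyMeasurable.smul
        aestronglyMeasurable_id)
    · filter_upwards with x
      rw [norm_smul, Real.norm_eq_abs,
        abs_of_nonneg (mul_nonneg (hp_nonneg x) (hq_pos x).le)]
      rw [mul_comm]
  have hT : (∫ x, p x * q x) = A + B := (integral_add_compl hS hpq_int).symm
  have hW : (∫ x, (p x * q x) • x)
      = (∫ x in S, (p x * q x) • x) + ∫ x in Sᶜ, (p x * q x) • x :=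
    (integral_add_compl hS hvint).symm
  set U := ∫ x in S, (p x * q x) • x
  set V := ∫ x in Sᶜ, (p x * q x) • x
  have hA0 : A ≠ 0 := hA.ne'
  have hB0 : B ≠ 0 := hB.ne'
  have hAB0 : A + B ≠ 0 := by positivity
  rw [hEsafe, hEdata, hEunsafe, hβ, hT, hW]
  rw [smul_add, smul_sub, smul_add, smul_smul, smul_smul, smul_smul]
  match_scalars <;> field_simp <;> ring
end
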